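/- A normal-form McNaughton function φ(x) = min_{i∈I} max_{j∈Jᵢ} ρ(aᵢⱼ·x + bᵢⱼ) on [0,1]ⁿ is locally homogeneous in zero if and only if there exists an index i ∈ I such that bᵢⱼ ≤ 0 for every j ∈ Jᵢ. -/

import Mathlib

/-- The truncation function `ρ(y) = max(0, min(1, y))`. -/
noncomputable def rho (y : ℝ) : ℝ := max 0 (min 1 y)

/-- The unit hypercube `[0,1]ⁿ` inside `ℝⁿ`. -/
def unitCube (n : ℕ) : Set (Fin n → ℝ) := {x | ∀ t, x t ∈ Set.Icc (0 : ℝ) 1}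

/-- The normal-form McNaughton function
`φ(x) = min_i max_j ρ(aᵢⱼ·x + bᵢⱼ)` with integer data `a`, `b`. -/
noncomputable def mcN (n k : ℕ) (m : Fin (k + 1) → ℕ)
    (a : (i : Fin (k + 1)) → Fin (m i + 1) → Fin n → ℤ)
    (b : (i : Fin (k + 1)) → Fin (m i + 1) → ℤ) (x : Fin n → ℝ) : ℝ :=
  Finset.univ.inf' Finset.univ_nonempty fun i =>
    Finset.univ.sup' Finset.univ_nonempty fun j =>
      rho ((∑ t, (a i j t : ℝ) * x t) + (b i j : ℝ))

/-- The zeroset of a normal-form McNaughton function on `[0,1]ⁿ`. -/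
def zset (n k : ℕ) (m : Fin (k + 1) → ℕ)
    (a : (i : Fin (k + 1)) → Fin (m i + 1) → Fin n → ℤ)
    (b : (i : Fin (k + 1)) → Fin (m i + 1) → ℤ) : Set (Fin n → ℝ) :=
  {x ∈ unitCube n | mcN n k m a b x = 0}

/-- `φ` is locally homogeneous in zero: there is a neighborhood `U` of `0`
in `[0,1]ⁿ` such that `φ(N·x) = N·φ(x)` whenever `x ∈ U` and `N·x ∈ U`. -/
def LocHomZero (n : ℕ) (φ : (Fin n → ℝ) → ℝ) : Prop :=
  ∃ U : Set (Fin n → ℝ), U ⊆ unitCube n ∧ U ∈ nhdsWithin 0 (unitCube n) ∧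
    ∀ (N : ℕ) (x : Fin n → ℝ), x ∈ U → (fun t => (N : ℝ) * x t) ∈ U →
      φ (fun t => (N : ℝ) * x t) = (N : ℝ) * φ x

/-- A normal-form McNaughton function is locally homogeneous in zero iff
some disjunction has all constant terms `≤ 0`. -/
theorem stmt15 (n k : ℕ) (m : Fin (k + 1) → ℕ)
    (a : (i : Fin (k + 1)) → Fin (m i + 1) → Fin n → ℤ)
    (b : (i : Fin (k + 1)) → Fin (m i + 1) → ℤ) :
    LocHomZero n (mcN n k m a b) ↔ ∃ i, ∀ j, b i j ≤ 0 := by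
  classical
  constructor
  · rintro ⟨U, hUsub, hUnhds, hhom⟩
    by_contra hc
    push_neg at hc
    have h0cube : (0 : Fin n → ℝ) ∈ unitCube n := by
      intro t; simp [Set.mem_Icc]
    have h0U : (0 : Fin n → ℝ) ∈ U := mem_of_mem_nhdsWithin h0cube hUnhds
    have hfun : (fun t => (0 : ℕ) * (0 : Fin n → ℝ) t) = (0 : Fin n → ℝ) := by
      funext t; simp
    have h := hhom 0 0 h0U (by rw [show (fun t => ((0:ℕ) : ℝ) * (0 : Fin n → ℝ) t) = (0 : Fin n → ℝ) by funext t; simp]; exact h0U)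
    rw [show (fun t => ((0:ℕ) : ℝ) * (0 : Fin n → ℝ) t) = (0 : Fin n → ℝ) by funext t; simp] at h
    simp only [Nat.cast_zero, zero_mul] at h
    have h1 : (1 : ℝ) ≤ mcN n k m a b 0 := by
      unfold mcN
      apply Finset.le_inf'
      intro i _
      obtain ⟨j, hj⟩ := hc i
      have hterm : (1 : ℝ) ≤ rho ((∑ t, (a i j t : ℝ) * (0 : Fin n → ℝ) t) + (b i j : ℝ)) := by
        have hsum : (∑ t, (a i j t : ℝ) * (0 : Fin n → ℝ) t) = 0 := by simp
        rw [hsum, zero_add]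
        have hb : (1 : ℝ) ≤ (b i j : ℝ) := by exact_mod_cast hj
        unfold rho
        rw [min_eq_left hb]
        norm_num
      exact le_trans hterm (Finset.le_sup'
        (fun j' => rho ((∑ t, (a i j' t : ℝ) * (0 : Fin n → ℝ) t) + (b i j' : ℝ)))
        (Finset.mem_univ j))
    linarith
  · rintro ⟨i₀, hb0⟩
    set A : ℝ := 1 + ∑ i, ∑ j, ∑ t, |(a i j t : ℝ)| with hA
    have hA1 : (1 : ℝ) ≤ A := le_add_of_nonneg_right (by positivity)
    have hApos : (0 : ℝ) < A := lt_of_lt_of_le one_pos hA1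
    set ε : ℝ := 1 / (4 * A) with hεdef
    have hεpos : (0 : ℝ) < ε := by rw [hεdef]; positivity
    set U : Set (Fin n → ℝ) := {x | x ∈ unitCube n ∧ ∀ t, x t < ε} with hUdef
    have key : ∀ y ∈ U, ∀ (i : Fin (k + 1)) (j : Fin (m i + 1)),
        |∑ t, (a i j t : ℝ) * y t| ≤ 1 / 4 := by
      intro y hy i j
      have h1 : |∑ t, (a i j t : ℝ) * y t| ≤ ∑ t, |(a i j t : ℝ)| * ε := by
        refine le_trans (Finset.abs_sum_le_sum_abs _ _) ?_
        refine Finset.sum_le_sum fun t _ => ?_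
        rw [abs_mul]
        refine mul_le_mul_of_nonneg_left ?_ (abs_nonneg _)
        rw [abs_of_nonneg ((hy.1 t).1)]
        exact le_of_lt (hy.2 t)
      have h2 : (∑ t, |(a i j t : ℝ)|) ≤ A := by
        rw [hA]
        have hs : (∑ t, |(a i j t : ℝ)|) ≤ ∑ j', ∑ t, |(a i j' t : ℝ)| :=
          Finset.single_le_sum (f := fun j' => ∑ t, |(a i j' t : ℝ)|)
            (fun j' _ => by positivity) (Finset.mem_univ j)
        have hs2 : (∑ j', ∑ t, |(a i j' t : ℝ)|) ≤ ∑ i', ∑ j', ∑ t, |(a i' j' t : ℝ)| :=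
          Finset.single_le_sum (f := fun i' => ∑ j', ∑ t, |(a i' j' t : ℝ)|)
            (fun i' _ => by positivity) (Finset.mem_univ i)
        linarith
      calc |∑ t, (a i j t : ℝ) * y t| ≤ ∑ t, |(a i j t : ℝ)| * ε := h1
        _ = (∑ t, |(a i j t : ℝ)|) * ε := by rw [Finset.sum_mul]
        _ ≤ A * ε := mul_le_mul_of_nonneg_right h2 (le_of_lt hεpos)
        _ = 1 / 4 := by rw [hεdef]; field_simp
    set S : Finset (Fin (k + 1)) := Finset.univ.filter (fun i => ∀ j, b i j ≤ 0) with hSdef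
    have hmemS : ∀ i, i ∈ S ↔ ∀ j, b i j ≤ 0 := by intro i; rw [hSdef]; simp
    have hi₀S : i₀ ∈ S := (hmemS i₀).2 hb0
    have hS : S.Nonempty := ⟨i₀, hi₀S⟩
    have rho_nonpos : ∀ z : ℝ, z ≤ 0 → rho z = 0 := by
      intro z hz; unfold rho
      rw [min_eq_right (le_trans hz zero_le_one), max_eq_left hz]
    have rho_le : ∀ z c : ℝ, 0 ≤ c → z ≤ c → rho z ≤ c := by
      intro z c hc hz; unfold rho
      exact max_le hc (le_trans (min_le_right _ _) hz)
    have rho_eq : ∀ z : ℝ, z ≤ 1 → rho z = max 0 z := by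
      intro z hz; unfold rho; rw [min_eq_right hz]
    have hupper : ∀ y ∈ U, ∀ i ∈ S,
        (Finset.univ.sup' Finset.univ_nonempty fun j =>
          rho ((∑ t, (a i j t : ℝ) * y t) + (b i j : ℝ))) ≤ 1 / 4 := by
      intro y hy i hi
      refine Finset.sup'_le _ _ fun j _ => ?_
      refine rho_le _ _ (by norm_num) ?_
      have hb : (b i j : ℝ) ≤ 0 := by exact_mod_cast (hmemS i).1 hi j
      have habs := (abs_le.1 (key y hy i j)).2
      linarith
    have hlower : ∀ y ∈ U, ∀ i, i ∉ S →
        (3 / 4 : ℝ) ≤ Finset.univ.sup' Finset.univ_nonempty fun j =>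
          rho ((∑ t, (a i j t : ℝ) * y t) + (b i j : ℝ)) := by
      intro y hy i hi
      rw [hmemS] at hi; push_neg at hi
      obtain ⟨j, hj⟩ := hi
      have hb : (1 : ℝ) ≤ (b i j : ℝ) := by exact_mod_cast hj
      have habs := (abs_le.1 (key y hy i j)).1
      refine le_trans ?_ (Finset.le_sup' _ (Finset.mem_univ j))
      unfold rho
      have h34 : (3 / 4 : ℝ) ≤ (∑ t, (a i j t : ℝ) * y t) + (b i j : ℝ) := by linarith
      calc (3 / 4 : ℝ) ≤ min 1 ((∑ t, (a i j t : ℝ) * y t) + (b i j : ℝ)) :=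
            le_min (by norm_num) h34
        _ ≤ max 0 (min 1 ((∑ t, (a i j t : ℝ) * y t) + (b i j : ℝ))) := le_max_right _ _
    have eqA : ∀ y ∈ U, mcN n k m a b y =
        S.inf' hS fun i => Finset.univ.sup' Finset.univ_nonempty fun j =>
          rho ((∑ t, (a i j t : ℝ) * y t) + (b i j : ℝ)) := by
      intro y hy
      unfold mcN
      apply le_antisymm
      · exact Finset.le_inf' _ _ fun i _ => Finset.inf'_le _ (Finset.mem_univ i)
      · refine Finset.le_inf' _ _ fun i _ => ?_
        by_cases hi : i ∈ S
        · exact Finset.inf'_le _ hi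
        · refine le_trans (le_trans (Finset.inf'_le _ hi₀S) (hupper y hy i₀ hi₀S)) ?_
          exact le_trans (by norm_num) (hlower y hy i hi)
    refine ⟨U, fun x hx => hx.1, ?_, ?_⟩
    · rw [mem_nhdsWithin]
      refine ⟨{x : Fin n → ℝ | ∀ t, x t < ε}, ?_, fun t => by simpa using hεpos, ?_⟩
      · have hV : {x : Fin n → ℝ | ∀ t, x t < ε} =
            ⋂ t, (fun x : Fin n → ℝ => x t) ⁻¹' Set.Iio ε := by
          ext x; simp [Set.mem_iInter]
        rw [hV]
        exact isOpen_iInter_of_finite fun t => isOpen_Iio.preimage (continuous_apply t)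
      · rintro x ⟨hxV, hxC⟩
        exact ⟨hxC, hxV⟩
    · intro N x hx hNx
      have hsum : ∀ (i : Fin (k + 1)) (j : Fin (m i + 1)),
          (∑ t, (a i j t : ℝ) * ((N : ℝ) * x t)) = (N : ℝ) * ∑ t, (a i j t : ℝ) * x t := by
        intro i j
        rw [Finset.mul_sum]
        exact Finset.sum_congr rfl fun t _ => by ring
      have hterm : ∀ i ∈ S, ∀ j : Fin (m i + 1),
          rho ((∑ t, (a i j t : ℝ) * ((N : ℝ) * x t)) + (b i j : ℝ))
            = (N : ℝ) * rho ((∑ t, (a i j t : ℝ) * x t) + (b i j : ℝ)) := by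
        intro i hi j
        have hb : b i j ≤ 0 := (hmemS i).1 hi j
        have hL := (abs_le.1 (key x hx i j)).2
        have hNL' := (abs_le.1 (key _ hNx i j)).2
        rw [hsum i j] at hNL' ⊢
        rcases lt_or_eq_of_le hb with hblt | hbeq
        · have hb1 : (b i j : ℝ) ≤ -1 := by exact_mod_cast (by omega : b i j ≤ -1)
          rw [rho_nonpos _ (by linarith), rho_nonpos _ (by linarith), mul_zero]
        · have hbr : (b i j : ℝ) = 0 := by rw [hbeq]; norm_num
          rw [hbr, add_zero, add_zero]
          rw [rho_eq _ (by linarith), rho_eq _ (by linarith [hNL', hsum i j])]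
          · rw [mul_max_of_nonneg _ _ (Nat.cast_nonneg N : (0:ℝ) ≤ N), mul_zero]
      have step1 : ∀ i ∈ S,
          (Finset.univ.sup' Finset.univ_nonempty fun j =>
            rho ((∑ t, (a i j t : ℝ) * ((N : ℝ) * x t)) + (b i j : ℝ)))
            = (N : ℝ) * Finset.univ.sup' Finset.univ_nonempty
                (fun j => rho ((∑ t, (a i j t : ℝ) * x t) + (b i j : ℝ))) := by
        intro i hi
        rw [Finset.sup'_congr Finset.univ_nonempty rfl (fun j _ => hterm i hi j)]
        exact (Finset.comp_sup'_eq_sup'_comp _ (fun z : ℝ => (N : ℝ) * z)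
          (fun z w => mul_max_of_nonneg z w (Nat.cast_nonneg N))).symm
      rw [eqA _ hNx, eqA x hx]
      rw [Finset.inf'_congr hS rfl step1]
      exact (Finset.apply_inf'_eq_inf'_comp hS (fun z : ℝ => (N : ℝ) * z)
        (fun z w => mul_min_of_nonneg z w (Nat.cast_nonneg N))).symm
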